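/- Let A and B be abelian groups, and suppose there exist homomorphisms f : A → B and g : B → A with g ∘ f = n·id_A for some positive integer n. If B is finitely generated, then A is an extension of a finitely generated abelian group by a group of finite exponent; that is, there is a subgroup T ⊆ A of finite exponent with A/T finitely generated. -/

import Mathlib

/-- If `g ∘ f = n • id_A` with `n > 0` and `B` is finitely generated, then `A` is an
extension of a finitely generated abelian group by a group of finite exponent. -/
theorem stmt_5 (A B : Type) [AddCommGroup A] [AddCommGroup B]
    (f : A →+ B) (g : B →+ A) (n : ℕ) (hn : 0 < n)
    (hgf : ∀ a : A, g (f a) = (n : ℤ) • a)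
    (hB : AddGroup.FG B) :
    ∃ T : AddSubgroup A, (∃ m : ℕ, 0 < m ∧ ∀ t ∈ T, (m : ℤ) • t = 0) ∧
      AddGroup.FG (A ⧸ T) := by
  refine ⟨f.ker, ⟨n, hn, fun t ht => ?_⟩, ?_⟩
  · rw [← hgf t, AddMonoidHom.mem_ker.mp ht, map_zero]
  · have hBf : Module.Finite ℤ B := Module.Finite.iff_addGroup_fg.mpr hB
    have : IsNoetherian ℤ B := isNoetherian_of_isNoetherianRing_of_finite ℤ B
    have hr : AddGroup.FG f.range := by
      rw [AddGroup.fg_iff_addSubgroup_fg]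
      have := IsNoetherian.noetherian (f.range.toIntSubmodule)
      rw [Submodule.fg_iff_addSubgroup_fg] at this
      simpa using this
    exact AddGroup.fg_of_surjective
      (f := (QuotientAddGroup.quotientKerEquivRange f).symm.toAddMonoidHom)
      (QuotientAddGroup.quotientKerEquivRange f).symm.surjective
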